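/- For every ρ : Matrix (ιA × ιB) (ιA × ιB) ℂ, the trace norm of the partial transpose is bounded by ‖ρ^{T_B}‖₁ ≤ min(d_A, d_B) · ‖ρ‖₁. -/

import Mathlib

open Matrix
open scoped ComplexOrder

/-- The matrix absolute value `|X|`: the unique positive semidefinite square root of `Xᴴ * X`. -/
noncomputable def matAbs {n : Type*} [Fintype n] [DecidableEq n] (X : Matrix n n ℂ) :
    Matrix n n ℂ :=
  (Matrix.posSemidef_conjTranspose_mul_self X).1.eigenvectorUnitary.1 *
    diagonal ((↑) ∘ (√·) ∘ (Matrix.posSemidef_conjTranspose_mul_self X).1.eigenvalues) *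
    (star (Matrix.posSemidef_conjTranspose_mul_self X).1.eigenvectorUnitary : Matrix n n ℂ)

/-- The trace norm `‖X‖₁ = trace |X|` (a real number). -/
noncomputable def traceNorm {n : Type*} [Fintype n] [DecidableEq n] (X : Matrix n n ℂ) : ℝ :=
  ((matAbs X).trace).re

/-- Partial transpose over the second tensor factor:
`ρ^{T_B} ((a,b),(a',b')) = ρ ((a,b'),(a',b))`. -/
def ptransB {ιA ιB : Type*} (ρ : Matrix (ιA × ιB) (ιA × ιB) ℂ) :
    Matrix (ιA × ιB) (ιA × ιB) ℂ :=
  Matrix.of fun p q => ρ (p.1, q.2) (q.1, p.2)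

noncomputable section
namespace PTaux
set_option linter.unusedSectionVars false
variable {n : Type*} [Fintype n]

/-- Euclidean norm of a complex vector. -/
def vnorm (v : n → ℂ) : ℝ := ‖(WithLp.equiv 2 (n → ℂ)).symm v‖
lemma inner_piLp_equiv_symm' (x y : n → ℂ) :
    inner ℂ ((WithLp.equiv 2 (n → ℂ)).symm x) ((WithLp.equiv 2 (n → ℂ)).symm y) = star x ⬝ᵥ y := by
  rw [dotProduct_comm]; rfl
lemma vnorm_nonneg (v : n → ℂ) : 0 ≤ vnorm v := norm_nonneg _
lemma vnorm_coe (b : EuclideanSpace ℂ n) : vnorm (⇑b) = ‖b‖ := rfl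
lemma dot_self_eq (v : n → ℂ) : star v ⬝ᵥ v = ((vnorm v : ℂ))^2 := by
  rw [← inner_piLp_equiv_symm']; exact inner_self_eq_norm_sq_to_K _
lemma abs_dot_le (w v : n → ℂ) : ‖star w ⬝ᵥ v‖ ≤ vnorm w * vnorm v := by
  rw [← inner_piLp_equiv_symm']
  exact norm_inner_le_norm _ _
lemma vnorm_sq (v : n → ℂ) : (vnorm v)^2 = ∑ i, ‖v i‖^2 := by
  rw [vnorm, EuclideanSpace.norm_eq, Real.sq_sqrt] <;> first | rfl | positivity

variable [DecidableEq n]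

lemma trace_eq_sum_eigs {A : Matrix n n ℂ} (hA : A.IsHermitian) :
    A.trace = ∑ i, (hA.eigenvalues i : ℂ) := by
  conv_lhs => rw [hA.spectral_theorem]
  rw [Unitary.conjStarAlgAut_apply]
  rw [Matrix.trace_mul_cycle]
  rw [show (star (hA.eigenvectorUnitary : Matrix n n ℂ)) * (hA.eigenvectorUnitary : Matrix n n ℂ) = 1 from Unitary.coe_star_mul_self _]
  rw [Matrix.one_mul, Matrix.trace_diagonal]
  rfl

lemma trace_sqrt {A : Matrix n n ℂ} (hA : A.PosSemidef) :
    (hA.1.eigenvectorUnitary.1 * diagonal (((↑) : ℝ → ℂ) ∘ (√·) ∘ hA.1.eigenvalues) *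
      (star hA.1.eigenvectorUnitary : Matrix n n ℂ)).trace
      = ∑ i, (Real.sqrt (hA.1.eigenvalues i) : ℂ) := by
  rw [Matrix.trace_mul_cycle]
  rw [show (star (hA.1.eigenvectorUnitary : Matrix n n ℂ)) * (hA.1.eigenvectorUnitary : Matrix n n ℂ) = 1 from Unitary.coe_star_mul_self _]
  rw [Matrix.one_mul, Matrix.trace_diagonal]
  rfl

variable (X : Matrix n n ℂ)

lemma traceNorm_eq_sum_sqrt :
    traceNorm X
      = ∑ i, Real.sqrt ((Matrix.posSemidef_conjTranspose_mul_self X).1.eigenvalues i) := by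
  rw [traceNorm, matAbs, trace_sqrt (Matrix.posSemidef_conjTranspose_mul_self X), Complex.re_sum]
  simp

lemma vnorm_mulVec_eigen (j : n) :
    vnorm (X *ᵥ ⇑((Matrix.posSemidef_conjTranspose_mul_self X).1.eigenvectorBasis j))
      = Real.sqrt ((Matrix.posSemidef_conjTranspose_mul_self X).1.eigenvalues j) := by
  set hH := (Matrix.posSemidef_conjTranspose_mul_self X).1
  set v := ⇑(hH.eigenvectorBasis j)
  have h1 : ((vnorm (X *ᵥ v) : ℂ))^2 = ((hH.eigenvalues j : ℝ) : ℂ) := by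
    rw [← dot_self_eq]
    rw [Matrix.star_mulVec, ← Matrix.dotProduct_mulVec, Matrix.mulVec_mulVec]
    rw [hH.mulVec_eigenvectorBasis]
    rw [dotProduct_smul]
    have : star v ⬝ᵥ v = 1 := by
      rw [dot_self_eq, vnorm_coe, hH.eigenvectorBasis.orthonormal.1 j]
      norm_num
    rw [this]
    simp [Complex.real_smul]
  have h2 : (vnorm (X *ᵥ v))^2 = hH.eigenvalues j := by exact_mod_cast h1
  rw [← h2, Real.sqrt_sq (vnorm_nonneg _)]

lemma traceNorm_eq_sum_vnorm :
    traceNorm X = ∑ j, vnorm (X *ᵥ ⇑((Matrix.posSemidef_conjTranspose_mul_self X).1.eigenvectorBasis j)) := by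
  rw [traceNorm_eq_sum_sqrt]
  exact Finset.sum_congr rfl fun j _ => (vnorm_mulVec_eigen X j).symm

lemma trace_onb {A : Matrix n n ℂ} (B : Matrix n n ℂ) (hA : A.IsHermitian) :
    B.trace = ∑ j, star (⇑(hA.eigenvectorBasis j)) ⬝ᵥ (B *ᵥ ⇑(hA.eigenvectorBasis j)) := by
  set U : Matrix n n ℂ := (hA.eigenvectorUnitary : Matrix n n ℂ)
  have key : ∀ j, star (⇑(hA.eigenvectorBasis j)) ⬝ᵥ (B *ᵥ ⇑(hA.eigenvectorBasis j))
      = (star U * B * U) j j := by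
    intro j
    simp only [Matrix.mul_apply, dotProduct, Matrix.mulVec, Matrix.star_apply,
      Pi.star_apply, U, dotProduct, Matrix.IsHermitian.eigenvectorUnitary_apply]
    simp_rw [Finset.mul_sum, Finset.sum_mul]
    rw [Finset.sum_comm]
    refine Finset.sum_congr rfl fun p _ => Finset.sum_congr rfl fun q _ => ?_
    ring
  simp_rw [key]
  have : ∑ j, (star U * B * U) j j = (star U * B * U).trace := rfl
  rw [this, Matrix.trace_mul_cycle]
  rw [show U * star U = 1 from Unitary.coe_mul_star_self _, Matrix.one_mul]

/-- Hölder-type inequality. -/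
lemma holder (M ρ : Matrix n n ℂ) (C : ℝ)
    (hM : ∀ x y : n → ℂ, ‖star y ⬝ᵥ (M *ᵥ x)‖ ≤ C * vnorm x * vnorm y) :
    ‖(M * ρ).trace‖ ≤ C * traceNorm ρ := by
  set hH := (Matrix.posSemidef_conjTranspose_mul_self ρ).1
  rw [trace_onb (M * ρ) hH]
  calc ‖∑ j, star (⇑(hH.eigenvectorBasis j)) ⬝ᵥ ((M * ρ) *ᵥ ⇑(hH.eigenvectorBasis j))‖
      ≤ ∑ j, ‖star (⇑(hH.eigenvectorBasis j)) ⬝ᵥ ((M * ρ) *ᵥ ⇑(hH.eigenvectorBasis j))‖ :=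
        norm_sum_le _ _
    _ ≤ ∑ j, C * vnorm (ρ *ᵥ ⇑(hH.eigenvectorBasis j)) := by
        refine Finset.sum_le_sum fun j _ => ?_
        rw [← Matrix.mulVec_mulVec]
        have := hM (ρ *ᵥ ⇑(hH.eigenvectorBasis j)) (⇑(hH.eigenvectorBasis j))
        have h1 : vnorm (⇑(hH.eigenvectorBasis j)) = 1 := by
          rw [vnorm_coe, hH.eigenvectorBasis.orthonormal.1 j]
        rw [h1, mul_one] at this
        exact this
    _ = C * traceNorm ρ := by
        rw [← Finset.mul_sum, traceNorm_eq_sum_vnorm]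

/-- `traceNorm X ≤ √(rank X) · ‖X‖_F`. -/
lemma traceNorm_le_sqrt_rank_mul (X : Matrix n n ℂ) :
    traceNorm X ≤ Real.sqrt (X.rank) * Real.sqrt ((Xᴴ * X).trace.re) := by
  set hX := Matrix.posSemidef_conjTranspose_mul_self X
  set lam := hX.1.eigenvalues
  have hlam : ∀ i, 0 ≤ lam i := hX.eigenvalues_nonneg
  set S : Finset n := Finset.univ.filter (fun i => lam i ≠ 0)
  have h0 : traceNorm X = ∑ i ∈ S, Real.sqrt (lam i) := by
    rw [traceNorm_eq_sum_sqrt]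
    refine (Finset.sum_subset (Finset.filter_subset _ _) ?_).symm
    intro i _ hi
    simp only [S, Finset.mem_filter, Finset.mem_univ, true_and, not_not] at hi
    exact Real.sqrt_eq_zero'.mpr hi.le
  have hsq : (∑ i ∈ S, Real.sqrt (lam i))^2 ≤ (S.card : ℝ) * ∑ i ∈ S, lam i := by
    have h := sq_sum_le_card_mul_sum_sq (s := S) (f := fun i => Real.sqrt (lam i))
    have he : ∀ i ∈ S, Real.sqrt (lam i)^2 = lam i := fun i _ => Real.sq_sqrt (hlam i)
    rwa [Finset.sum_congr rfl he] at h
  have hcard : (S.card : ℝ) = (X.rank : ℝ) := by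
    have h1 : (Xᴴ * X).rank = Fintype.card {i // lam i ≠ 0} := hX.1.rank_eq_card_non_zero_eigs
    have h2 : Fintype.card {i // lam i ≠ 0} = S.card := by
      rw [Fintype.card_subtype]
    rw [← Matrix.rank_conjTranspose_mul_self X, h1, h2]
  have htr : ∑ i ∈ S, lam i ≤ (Xᴴ * X).trace.re := by
    have : (Xᴴ * X).trace.re = ∑ i, lam i := by
      rw [trace_eq_sum_eigs hX.1, Complex.re_sum]; simp [lam]
    rw [this]
    exact Finset.sum_le_sum_of_subset_of_nonneg (Finset.filter_subset _ _)
      (fun i _ _ => hlam i)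
  have hnn : 0 ≤ ∑ i ∈ S, Real.sqrt (lam i) :=
    Finset.sum_nonneg fun i _ => Real.sqrt_nonneg _
  rw [h0]
  have hkey : (∑ i ∈ S, Real.sqrt (lam i))^2 ≤ (X.rank : ℝ) * (Xᴴ * X).trace.re := by
    calc (∑ i ∈ S, Real.sqrt (lam i))^2 ≤ (S.card : ℝ) * ∑ i ∈ S, lam i := hsq
      _ ≤ (X.rank : ℝ) * (Xᴴ * X).trace.re := by
          rw [hcard]
          exact mul_le_mul_of_nonneg_left htr (Nat.cast_nonneg _)
  calc ∑ i ∈ S, Real.sqrt (lam i)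
      = Real.sqrt ((∑ i ∈ S, Real.sqrt (lam i))^2) := (Real.sqrt_sq hnn).symm
    _ ≤ Real.sqrt ((X.rank : ℝ) * (Xᴴ * X).trace.re) := Real.sqrt_le_sqrt hkey
    _ = Real.sqrt (X.rank) * Real.sqrt ((Xᴴ * X).trace.re) := Real.sqrt_mul (Nat.cast_nonneg _) _

lemma dot_eq_trace (N : Matrix n n ℂ) (z w : n → ℂ) :
    star w ⬝ᵥ (N *ᵥ z) = (N * Matrix.vecMulVec z (star w)).trace := by
  simp only [Matrix.trace, Matrix.diag, Matrix.mul_apply, Matrix.vecMulVec_apply,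
    dotProduct, Matrix.mulVec, Pi.star_apply]
  refine Finset.sum_congr rfl fun p _ => ?_
  rw [Finset.mul_sum]
  exact Finset.sum_congr rfl fun q _ => by ring

lemma sum_mulVec' {α : Type*} (s : Finset α) (f : α → Matrix n n ℂ) (z : n → ℂ) :
    (∑ k ∈ s, f k) *ᵥ z = ∑ k ∈ s, f k *ᵥ z := by
  funext i
  simp only [Matrix.mulVec, dotProduct, Matrix.sum_apply, Finset.sum_apply,
    Finset.sum_mul]
  exact Finset.sum_comm

lemma dotProduct_sum' {α : Type*} (s : Finset α) (w : n → ℂ) (f : α → n → ℂ) :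
    w ⬝ᵥ (∑ k ∈ s, f k) = ∑ k ∈ s, w ⬝ᵥ f k := by
  simp only [dotProduct, Finset.sum_apply, Finset.mul_sum]
  exact Finset.sum_comm

lemma vecMulVec_mulVec (a b z : n → ℂ) :
    Matrix.vecMulVec a b *ᵥ z = (b ⬝ᵥ z) • a := by
  funext i
  simp [Matrix.mulVec, Matrix.vecMulVec_apply, dotProduct, Finset.sum_mul, Finset.mul_sum]
  exact Finset.sum_congr rfl fun q _ => by ring

variable {ιA ιB : Type*} [Fintype ιA] [DecidableEq ιA] [Fintype ιB] [DecidableEq ιB]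

def swapE : ((ιA × ιB) × (ιA × ιB)) ≃ ((ιA × ιB) × (ιA × ιB)) where
  toFun pq := ((pq.1.1, pq.2.2), (pq.2.1, pq.1.2))
  invFun pq := ((pq.1.1, pq.2.2), (pq.2.1, pq.1.2))
  left_inv _ := rfl
  right_inv _ := rfl

lemma trace_mul_eq_sum {m : Type*} [Fintype m] (A B : Matrix m m ℂ) :
    (A * B).trace = ∑ pq : m × m, A pq.1 pq.2 * B pq.2 pq.1 := by
  rw [Fintype.sum_prod_type]
  simp [Matrix.trace, Matrix.diag, Matrix.mul_apply]

lemma trace_ptransB_mul (X Y : Matrix (ιA × ιB) (ιA × ιB) ℂ) :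
    (ptransB X * Y).trace = (X * ptransB Y).trace := by
  rw [trace_mul_eq_sum, trace_mul_eq_sum]
  exact (Fintype.sum_equiv swapE _ _ fun pq => rfl).symm

lemma ptransB_sum {α : Type*} (s : Finset α) (f : α → Matrix (ιA × ιB) (ιA × ιB) ℂ) :
    ptransB (∑ k ∈ s, f k) = ∑ k ∈ s, ptransB (f k) := by
  ext p q
  simp [ptransB, Matrix.sum_apply]

lemma rank_ptransB_rankone_le (x y : ιA × ιB → ℂ) :
    (ptransB (Matrix.vecMulVec x (star y))).rank
      ≤ min (Fintype.card ιA) (Fintype.card ιB) * min (Fintype.card ιA) (Fintype.card ιB) := by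
  set N := ptransB (Matrix.vecMulVec x (star y)) with hN
  have hA : N.rank ≤ Fintype.card ιA * Fintype.card ιA := by
    set L : Matrix (ιA × ιB) (ιA × ιA) ℂ :=
      Matrix.of fun p c => if p.1 = c.1 then star (y (c.2, p.2)) else 0
    set R : Matrix (ιA × ιA) (ιA × ιB) ℂ :=
      Matrix.of fun c q => if c.2 = q.1 then x (c.1, q.2) else 0
    have hfac : N = L * R := by
      ext p q
      simp only [N, ptransB, Matrix.of_apply, Matrix.vecMulVec_apply, Pi.star_apply,
        Matrix.mul_apply, L, R, Fintype.sum_prod_type, ite_mul, mul_ite, zero_mul, mul_zero]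
      rw [Finset.sum_eq_single p.1]
      · rw [Finset.sum_eq_single q.1] <;> simp +contextual [eq_comm, mul_comm]
      · intro e _ he; simp [Ne.symm he]
      · simp
    calc N.rank = (L * R).rank := by rw [hfac]
      _ ≤ L.rank := Matrix.rank_mul_le_left L R
      _ ≤ Fintype.card (ιA × ιA) := Matrix.rank_le_card_width L
      _ = Fintype.card ιA * Fintype.card ιA := by rw [Fintype.card_prod]
  have hB : N.rank ≤ Fintype.card ιB * Fintype.card ιB := by
    set L : Matrix (ιA × ιB) (ιB × ιB) ℂ :=
      Matrix.of fun p d => if p.2 = d.1 then x (p.1, d.2) else 0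
    set R : Matrix (ιB × ιB) (ιA × ιB) ℂ :=
      Matrix.of fun d q => if d.2 = q.2 then star (y (q.1, d.1)) else 0
    have hfac : N = L * R := by
      ext p q
      simp only [N, ptransB, Matrix.of_apply, Matrix.vecMulVec_apply, Pi.star_apply,
        Matrix.mul_apply, L, R, Fintype.sum_prod_type, ite_mul, mul_ite, zero_mul, mul_zero]
      rw [Finset.sum_eq_single p.2]
      · rw [Finset.sum_eq_single q.2] <;> simp +contextual [eq_comm, mul_comm]
      · intro e _ he; simp [Ne.symm he]
      · simp
    calc N.rank = (L * R).rank := by rw [hfac]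
      _ ≤ L.rank := Matrix.rank_mul_le_left L R
      _ ≤ Fintype.card (ιB × ιB) := Matrix.rank_le_card_width L
      _ = Fintype.card ιB * Fintype.card ιB := by rw [Fintype.card_prod]
  rcases le_total (Fintype.card ιA) (Fintype.card ιB) with h | h
  · rw [min_eq_left h]; exact hA
  · rw [min_eq_right h]; exact hB

lemma frob_ptransB_rankone (x y : ιA × ιB → ℂ) :
    ((ptransB (Matrix.vecMulVec x (star y)))ᴴ * ptransB (Matrix.vecMulVec x (star y))).trace.re
      = (∑ i, ‖x i‖^2) * (∑ i, ‖y i‖^2) := by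
  set N := ptransB (Matrix.vecMulVec x (star y)) with hN
  have h1 : (Nᴴ * N).trace = ∑ q, ∑ p, ((‖N p q‖^2 : ℝ) : ℂ) := by
    simp only [Matrix.trace, Matrix.diag, Matrix.mul_apply, Matrix.conjTranspose_apply]
    refine Finset.sum_congr rfl fun q _ => Finset.sum_congr rfl fun p _ => ?_
    rw [show star (N p q) * N p q = ((starRingEnd ℂ) (N p q)) * N p q from rfl,
      ← Complex.normSq_eq_conj_mul_self, Complex.normSq_eq_norm_sq]
  have h2 : ∀ (p q : ιA × ιB), ‖N p q‖^2 = ‖x (p.1, q.2)‖^2 * ‖y (q.1, p.2)‖^2 := by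
    intro p q
    simp only [N, ptransB, Matrix.of_apply, Matrix.vecMulVec_apply, Pi.star_apply]
    rw [norm_mul, mul_pow]
    congr 1
    rw [norm_star]
  have h3 : ∑ q, ∑ p, (‖N p q‖^2 : ℝ) = (∑ i, ‖x i‖^2) * (∑ i, ‖y i‖^2) := by
    calc ∑ q, ∑ p, (‖N p q‖^2 : ℝ)
        = ∑ qp : (ιA × ιB) × (ιA × ιB), ‖N qp.2 qp.1‖^2 :=
          (Fintype.sum_prod_type (f := fun qp => (‖N qp.2 qp.1‖^2 : ℝ))).symm
      _ = ∑ ij : (ιA × ιB) × (ιA × ιB), ‖x ij.1‖^2 * ‖y ij.2‖^2 := by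
          refine Fintype.sum_equiv ((Equiv.prodComm _ _).trans swapE) _ _ fun qp => ?_
          rw [h2]
          rfl
      _ = ∑ i : ιA × ιB, ∑ j : ιA × ιB, ‖x i‖^2 * ‖y j‖^2 :=
          Fintype.sum_prod_type (f := fun ij => (‖x ij.1‖^2 * ‖y ij.2‖^2 : ℝ))
      _ = (∑ i, ‖x i‖^2) * (∑ i, ‖y i‖^2) := by rw [Finset.sum_mul_sum]
  rw [h1, ← h3]
  rw [Complex.re_sum]
  refine Finset.sum_congr rfl fun q _ => ?_
  rw [Complex.re_sum]
  refine Finset.sum_congr rfl fun p _ => ?_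
  simp [← Complex.ofReal_pow]

/-- Trace norm of the partial transpose of a rank-one matrix. -/
lemma traceNorm_ptransB_rankone (x y : ιA × ιB → ℂ) :
    traceNorm (ptransB (Matrix.vecMulVec x (star y)))
      ≤ ((min (Fintype.card ιA) (Fintype.card ιB) : ℕ) : ℝ) * (vnorm x * vnorm y) := by
  set N := ptransB (Matrix.vecMulVec x (star y)) with hN
  set m : ℕ := min (Fintype.card ιA) (Fintype.card ιB) with hm
  have h1 := traceNorm_le_sqrt_rank_mul N
  have hr : (N.rank : ℝ) ≤ (m : ℝ) * (m : ℝ) := by exact_mod_cast rank_ptransB_rankone_le x y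
  have hf : (Nᴴ * N).trace.re = ((vnorm x) * (vnorm y))^2 := by
    rw [hN, frob_ptransB_rankone, mul_pow, vnorm_sq, vnorm_sq]
  calc traceNorm N ≤ Real.sqrt (N.rank) * Real.sqrt ((Nᴴ * N).trace.re) := h1
    _ ≤ Real.sqrt ((m : ℝ) * (m : ℝ)) * Real.sqrt (((vnorm x) * (vnorm y))^2) := by
        rw [hf]
        exact mul_le_mul_of_nonneg_right (Real.sqrt_le_sqrt hr) (Real.sqrt_nonneg _)
    _ = (m : ℝ) * (vnorm x * vnorm y) := by
        rw [Real.sqrt_mul_self (Nat.cast_nonneg _),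
          Real.sqrt_sq (mul_nonneg (vnorm_nonneg _) (vnorm_nonneg _))]

end PTaux
end

open PTaux in
/-- **Trace-norm bound for the partial transpose:**
`‖ρ^{T_B}‖₁ ≤ min(d_A, d_B) · ‖ρ‖₁`. -/
theorem traceNorm_ptransB_le {ιA ιB : Type*}
    [Fintype ιA] [DecidableEq ιA] [Nonempty ιA]
    [Fintype ιB] [DecidableEq ιB] [Nonempty ιB]
    (ρ : Matrix (ιA × ιB) (ιA × ιB) ℂ) :
    traceNorm (ptransB ρ) ≤
      (min (Fintype.card ιA) (Fintype.card ιB) : ℝ) * traceNorm ρ := by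
  classical
  set T := ptransB ρ with hT
  set mR : ℝ := (min (Fintype.card ιA) (Fintype.card ιB) : ℝ) with hmR
  have hmcast : mR = ((min (Fintype.card ιA) (Fintype.card ιB) : ℕ) : ℝ) := by
    rw [hmR]; push_cast; rfl
  have hm0 : (0:ℝ) ≤ mR := by rw [hmcast]; exact Nat.cast_nonneg _
  set hH := (Matrix.posSemidef_conjTranspose_mul_self T).1 with hhH
  set v : (ιA × ιB) → ((ιA × ιB) → ℂ) := fun j => ⇑(hH.eigenvectorBasis j) with hv
  set σ : (ιA × ιB) → ℝ := fun j => vnorm (T *ᵥ v j) with hσ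
  have hσnn : ∀ j, 0 ≤ σ j := fun j => vnorm_nonneg _
  -- the orthonormal family of left singular vectors
  set u : {j // σ j ≠ 0} → ((ιA × ιB) → ℂ) :=
    fun k => ((σ k.1 : ℂ))⁻¹ • (T *ᵥ v k.1) with hu
  set W : Matrix (ιA × ιB) (ιA × ιB) ℂ :=
    ∑ k : {j // σ j ≠ 0}, Matrix.vecMulVec (v k.1) (star (u k)) with hW
  -- basic inner product computations
  have hTT : ∀ j k, star (T *ᵥ v j) ⬝ᵥ (T *ᵥ v k)
      = ((hH.eigenvalues k : ℝ) : ℂ) * (if j = k then 1 else 0) := by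
    intro j k
    rw [Matrix.star_mulVec, ← Matrix.dotProduct_mulVec, Matrix.mulVec_mulVec]
    rw [hH.mulVec_eigenvectorBasis, dotProduct_smul]
    have hvv : star (v j) ⬝ᵥ (v k) = if j = k then 1 else 0 := by
      have := orthonormal_iff_ite.mp hH.eigenvectorBasis.orthonormal j k
      rw [← this]; exact (inner_piLp_equiv_symm' _ _).symm
    rw [hvv]
    simp [Complex.real_smul]
  have hlamsig : ∀ j, ((hH.eigenvalues j : ℝ) : ℂ) = ((σ j : ℂ))^2 := by
    intro j
    have : σ j = Real.sqrt (hH.eigenvalues j) := vnorm_mulVec_eigen T j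
    have hnn : 0 ≤ hH.eigenvalues j :=
      (Matrix.posSemidef_conjTranspose_mul_self T).eigenvalues_nonneg j
    have : (σ j)^2 = hH.eigenvalues j := by rw [this, Real.sq_sqrt hnn]
    rw [← this]
    push_cast
    ring
  -- step 1 : trace (T * W) = ∑ σ over the support
  have step1 : (T * W).trace = ∑ k : {j // σ j ≠ 0}, ((σ k.1 : ℝ) : ℂ) := by
    rw [hW, Matrix.mul_sum, Matrix.trace_sum]
    refine Finset.sum_congr rfl fun k _ => ?_
    rw [← dot_eq_trace]
    rw [hu]
    simp only [star_smul, smul_dotProduct]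
    rw [hTT k.1 k.1, hlamsig k.1]
    have hne : ((σ k.1 : ℝ) : ℂ) ≠ 0 := by
      simpa using Complex.ofReal_ne_zero.mpr k.2
    rw [if_pos rfl]
    simp only [star_inv₀, RCLike.star_def, Complex.conj_ofReal, mul_one, smul_eq_mul]
    field_simp
  -- step 2 : traceNorm T = ∑ σ over the support
  have step2 : traceNorm T = ∑ k : {j // σ j ≠ 0}, σ k.1 := by
    rw [traceNorm_eq_sum_vnorm]
    rw [← Finset.sum_filter_ne_zero (f := σ)]
    exact (Finset.sum_subtype _ (by simp) σ)
  -- orthonormality of the u family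
  have huorth : Orthonormal ℂ (fun k : {j // σ j ≠ 0} =>
      (WithLp.equiv 2 ((ιA × ιB) → ℂ)).symm (u k)) := by
    rw [orthonormal_iff_ite]
    intro j k
    rw [inner_piLp_equiv_symm']
    rw [hu]
    simp only [star_smul, smul_dotProduct, dotProduct_smul]
    rw [hTT j.1 k.1, hlamsig k.1]
    simp only [star_inv₀, RCLike.star_def, Complex.conj_ofReal, smul_eq_mul]
    by_cases h : j = k
    · subst h
      have hne : ((σ j.1 : ℝ) : ℂ) ≠ 0 := by
        simpa using Complex.ofReal_ne_zero.mpr j.2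
      simp only [if_pos rfl, Subtype.coe_eta]
      field_simp
    · have h' : j.1 = k.1 ↔ False := by
        simp only [iff_false]
        exact fun hh => h (Subtype.ext hh)
      rw [if_neg (h'.mp.mt not_false), if_neg h]
      simp
  -- step 4 : W is a contraction in the bilinear sense
  have step4 : ∀ z w : (ιA × ιB) → ℂ, ‖star w ⬝ᵥ (W *ᵥ z)‖ ≤ 1 * vnorm z * vnorm w := by
    intro z w
    have hWz : W *ᵥ z = ∑ k : {j // σ j ≠ 0}, (star (u k) ⬝ᵥ z) • v k.1 := by
      rw [hW, sum_mulVec']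
      exact Finset.sum_congr rfl fun k _ => vecMulVec_mulVec _ _ _
    rw [hWz, dotProduct_sum']
    simp only [dotProduct_smul, smul_eq_mul]
    calc ‖∑ k : {j // σ j ≠ 0}, (star (u k) ⬝ᵥ z) * (star w ⬝ᵥ v k.1)‖
        ≤ ∑ k : {j // σ j ≠ 0}, ‖star (u k) ⬝ᵥ z‖ * ‖star w ⬝ᵥ v k.1‖ := by
          refine (norm_sum_le _ _).trans ?_
          exact le_of_eq (Finset.sum_congr rfl fun k _ => norm_mul _ _)
      _ ≤ Real.sqrt (∑ k : {j // σ j ≠ 0}, ‖star (u k) ⬝ᵥ z‖^2)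
            * Real.sqrt (∑ k : {j // σ j ≠ 0}, ‖star w ⬝ᵥ v k.1‖^2) :=
          Real.sum_mul_le_sqrt_mul_sqrt _ _ _
      _ ≤ 1 * vnorm z * vnorm w := by
          have hb1 : ∑ k : {j // σ j ≠ 0}, ‖star (u k) ⬝ᵥ z‖^2 ≤ (vnorm z)^2 := by
            have := huorth.sum_inner_products_le
              ((WithLp.equiv 2 ((ιA × ιB) → ℂ)).symm z) (s := Finset.univ)
            refine le_trans (le_of_eq ?_) this
            refine Finset.sum_congr rfl fun k _ => ?_
            rw [inner_piLp_equiv_symm']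
          have hb2 : ∑ k : {j // σ j ≠ 0}, ‖star w ⬝ᵥ v k.1‖^2 ≤ (vnorm w)^2 := by
            have hB := hH.eigenvectorBasis.orthonormal.sum_inner_products_le
              ((WithLp.equiv 2 ((ιA × ιB) → ℂ)).symm w) (s := Finset.univ)
            have hstep : ∑ k : {j // σ j ≠ 0}, ‖star w ⬝ᵥ v k.1‖^2
                ≤ ∑ j, ‖star w ⬝ᵥ v j‖^2 := by
              rw [← Finset.sum_subtype (Finset.univ.filter (fun j => σ j ≠ 0))
                (by simp) (fun j => ‖star w ⬝ᵥ v j‖^2)]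
              exact Finset.sum_le_sum_of_subset_of_nonneg (Finset.filter_subset _ _)
                (fun i _ _ => by positivity)
            refine hstep.trans (le_trans (le_of_eq ?_) hB)
            refine Finset.sum_congr rfl fun j _ => ?_
            have hj : star w ⬝ᵥ v j
                = (inner ℂ ((WithLp.equiv 2 ((ιA × ιB) → ℂ)).symm w) (hH.eigenvectorBasis j) : ℂ) :=
              (inner_piLp_equiv_symm' w (v j)).symm
            rw [hj, norm_inner_symm]
          rw [one_mul]
          calc Real.sqrt (∑ k : {j // σ j ≠ 0}, ‖star (u k) ⬝ᵥ z‖^2)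
                * Real.sqrt (∑ k : {j // σ j ≠ 0}, ‖star w ⬝ᵥ v k.1‖^2)
              ≤ Real.sqrt ((vnorm z)^2) * Real.sqrt ((vnorm w)^2) :=
                mul_le_mul (Real.sqrt_le_sqrt hb1) (Real.sqrt_le_sqrt hb2)
                  (Real.sqrt_nonneg _) (Real.sqrt_nonneg _)
            _ = vnorm z * vnorm w := by
                rw [Real.sqrt_sq (vnorm_nonneg _), Real.sqrt_sq (vnorm_nonneg _)]
  -- step 5 : bilinear bound for ptransB W
  have step5 : ∀ z w : (ιA × ιB) → ℂ,
      ‖star w ⬝ᵥ (ptransB W *ᵥ z)‖ ≤ mR * vnorm z * vnorm w := by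
    intro z w
    rw [dot_eq_trace, trace_ptransB_mul]
    calc ‖(W * ptransB (Matrix.vecMulVec z (star w))).trace‖
        ≤ 1 * traceNorm (ptransB (Matrix.vecMulVec z (star w))) :=
          holder W _ 1 step4
      _ ≤ 1 * (((min (Fintype.card ιA) (Fintype.card ιB) : ℕ) : ℝ) * (vnorm z * vnorm w)) := by
          rw [one_mul, one_mul]
          exact traceNorm_ptransB_rankone z w
      _ = mR * vnorm z * vnorm w := by rw [hmcast]; ring
  -- step 6 : conclusion
  have key : (T * W).trace = (ptransB W * ρ).trace := by
    rw [hT, trace_ptransB_mul, Matrix.trace_mul_comm]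
  have hfinal : ‖(T * W).trace‖ ≤ mR * traceNorm ρ := by
    rw [key]
    exact holder (ptransB W) ρ mR step5
  have hre : traceNorm T = ((T * W).trace).re := by
    rw [step1, step2, Complex.re_sum]
    refine Finset.sum_congr rfl fun k _ => ?_
    simp
  calc traceNorm T = ((T * W).trace).re := hre
    _ ≤ ‖(T * W).trace‖ := Complex.re_le_norm _
    _ ≤ mR * traceNorm ρ := hfinal
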